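/- For every triangle-free finite simple graph F, with G_n = K_n^{⊗ n²} and p_n = (1 − 1/n)^{n²}, the normalized homomorphism density t_{p_n}(F, G_n) converges to 1 as n → ∞. -/

import Mathlib

set_option linter.unusedSectionVars false

open Filter Finset SimpleGraph

/-- The `m`-th tensor power of the complete graph `K_n`. -/
def tensorPow (n m : ℕ) : SimpleGraph (Fin m → Fin n) where
  Adj x y := x ≠ y ∧ ∀ i, x i ≠ y i
  symm := ⟨fun x y h => ⟨h.1.symm, fun i => (h.2 i).symm⟩⟩
  loopless := ⟨fun x h => h.1 rfl⟩

/-- The number of graph homomorphisms from `F` to `G`. -/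
noncomputable def homCount {α β : Type*} (F : SimpleGraph α) (G : SimpleGraph β) : ℕ :=
  Nat.card (F →g G)

section Aux
variable {V : Type*} [Fintype V] [DecidableEq V]

/-- Proper colorings of `F` with `n` colors. -/
def properSet (F : SimpleGraph V) [DecidableRel F.Adj] (n : ℕ) : Finset (V → Fin n) :=
  univ.filter fun f => ∀ a b, F.Adj a b → f a ≠ f b

lemma homCount_eq (F : SimpleGraph V) [DecidableRel F.Adj] (n m : ℕ) (hm : m ≠ 0) :
    homCount F (tensorPow n m) = (properSet F n).card ^ m := by
  have e : (F →g tensorPow n m) ≃ (Fin m → (properSet F n)) :=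
  { toFun := fun φ i => ⟨fun v => φ v i, by
      simp only [properSet, mem_filter, mem_univ, true_and]
      intro a b hab
      exact (φ.map_rel hab : φ a ≠ φ b ∧ ∀ i, φ a i ≠ φ b i).2 i⟩
    invFun := fun g => ⟨fun v i => (g i).1 v, by
      intro a b hab
      show _ ∧ _; refine ⟨fun h => ?_, fun i => ?_⟩
      · have h0 := (g ⟨0, Nat.pos_of_ne_zero hm⟩).2
        simp only [properSet, mem_filter, mem_univ, true_and] at h0
        exact h0 a b hab (congrFun h ⟨0, Nat.pos_of_ne_zero hm⟩)
      · have h0 := (g i).2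
        simp only [properSet, mem_filter, mem_univ, true_and] at h0
        exact h0 a b hab⟩
    left_inv := fun φ => rfl
    right_inv := fun g => by ext i v; rfl }
  rw [homCount, Nat.card_congr e, Nat.card_fun]
  simp [Nat.card_eq_fintype_card, Fintype.card_coe]

/-- Functions monochromatic on every edge of `S`. -/
def monoSet (n : ℕ) (S : Finset (Sym2 V)) : Finset (V → Fin n) :=
  univ.filter fun f => ∀ a b : V, s(a,b) ∈ S → f a = f b

/-- Number of connected components of the graph spanned by the edges in `S`. -/
noncomputable def cc (S : Finset (Sym2 V)) : ℕ :=
  Nat.card (fromEdgeSet (S : Set (Sym2 V))).ConnectedComponent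

lemma monoSet_card (n : ℕ) (S : Finset (Sym2 V)) :
    (monoSet (V := V) n S).card = n ^ cc (V := V) S := by
  classical
  set G := fromEdgeSet (S : Set (Sym2 V)) with hG
  have key : ∀ (f : V → Fin n), (∀ a b : V, s(a,b) ∈ S → f a = f b) →
      ∀ {a b : V} (_p : G.Walk a b), f a = f b := by
    intro f hf a b p
    induction p with
    | nil => rfl
    | @cons u v w h p ih =>
      have : s(u,v) ∈ S := by
        rw [hG, fromEdgeSet_adj] at h
        exact_mod_cast h.1
      exact (hf u v this).trans ih
  have e : {f : V → Fin n // f ∈ monoSet (V := V) n S} ≃ (G.ConnectedComponent → Fin n) :=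
  { toFun := fun f => ConnectedComponent.lift f.1 (fun v w p _ => by
      have hf := f.2
      simp only [monoSet, mem_filter, mem_univ, true_and] at hf
      exact key f.1 hf p)
    invFun := fun g => ⟨fun v => g (G.connectedComponentMk v), by
      simp only [monoSet, mem_filter, mem_univ, true_and]
      intro a b hab
      by_cases hab' : a = b
      · rw [hab']
      · exact congrArg g (ConnectedComponent.sound
          (SimpleGraph.Adj.reachable (by rw [hG, fromEdgeSet_adj]; exact ⟨by exact_mod_cast hab, hab'⟩)))⟩
    left_inv := fun f => by ext v; rfl
    right_inv := fun g => by
      funext c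
      refine ConnectedComponent.ind (fun v => rfl) c }
  have h1 : (monoSet (V := V) n S).card = Nat.card {f : V → Fin n // f ∈ monoSet (V := V) n S} := by
    simp [Nat.card_eq_fintype_card, Fintype.card_coe]
  rw [h1, Nat.card_congr e, Nat.card_fun]
  rw [Nat.card_eq_fintype_card (α := Fin n), Fintype.card_fin]; rfl

noncomputable def chi {n : ℕ} (f : V → Fin n) : Sym2 V → ℝ :=
  Sym2.lift ⟨fun a b => if f a = f b then (1:ℝ) else 0, by
    intro a b; simp only [eq_comm]⟩

lemma chi_mk {n : ℕ} (f : V → Fin n) (a b : V) :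
    chi f s(a,b) = if f a = f b then (1:ℝ) else 0 := Sym2.lift_mk _ _ _

lemma prod_chi {n : ℕ} (f : V → Fin n) (T : Finset (Sym2 V)) :
    ∏ e ∈ T, chi f e = if f ∈ monoSet (V := V) n T then (1:ℝ) else 0 := by
  by_cases h : f ∈ monoSet (V := V) n T
  · rw [if_pos h]
    refine Finset.prod_eq_one ?_
    intro e he
    induction e using Sym2.ind with
    | _ a b =>
      simp only [monoSet, mem_filter, mem_univ, true_and] at h
      rw [chi_mk, if_pos (h a b he)]
  · rw [if_neg h]
    simp only [monoSet, mem_filter, mem_univ, true_and, not_forall] at h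
    obtain ⟨a, b, hab, hne⟩ := h
    exact Finset.prod_eq_zero hab (by rw [chi_mk, if_neg hne])

lemma incl_excl (F : SimpleGraph V) [DecidableRel F.Adj] (n : ℕ) :
    ((properSet F n).card : ℝ) =
      ∑ T ∈ F.edgeFinset.powerset, (-1:ℝ)^T.card * (n:ℝ) ^ cc (V := V) T := by
  classical
  have step1 : ∀ f : V → Fin n,
      (∏ e ∈ F.edgeFinset, (1 - chi f e)) = if f ∈ properSet F n then (1:ℝ) else 0 := by
    intro f
    by_cases h : f ∈ properSet F n
    · rw [if_pos h]
      refine Finset.prod_eq_one ?_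
      intro e he
      induction e using Sym2.ind with
      | _ a b =>
        simp only [properSet, mem_filter, mem_univ, true_and] at h
        rw [mem_edgeFinset, mem_edgeSet] at he
        rw [chi_mk, if_neg (h a b he)]
        norm_num
    · rw [if_neg h]
      simp only [properSet, mem_filter, mem_univ, true_and, not_forall] at h
      obtain ⟨a, b, hab, hne⟩ := h
      push_neg at hne
      refine Finset.prod_eq_zero (i := s(a,b)) ?_ ?_
      · rw [mem_edgeFinset, mem_edgeSet]; exact hab
      · rw [chi_mk, if_pos hne]; norm_num
  have step2 : ∀ f : V → Fin n,
      (∏ e ∈ F.edgeFinset, (1 - chi f e)) =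
        ∑ T ∈ F.edgeFinset.powerset, (-1:ℝ)^T.card * ∏ e ∈ T, chi f e := by
    intro f
    have h : ∀ e : Sym2 V, (1 : ℝ) - chi f e = (- chi f e) + 1 := by intro e; ring
    simp_rw [h]
    rw [Finset.prod_add]
    refine Finset.sum_congr rfl ?_
    intro T _
    rw [Finset.prod_const_one, mul_one]
    have h2 : ∀ e ∈ T, - chi f e = (-1 : ℝ) * chi f e := by intro e _; ring
    rw [Finset.prod_congr rfl h2, Finset.prod_mul_distrib, Finset.prod_const]
  have lhs : ((properSet F n).card : ℝ) =
      ∑ f : V → Fin n, if f ∈ properSet F n then (1:ℝ) else 0 := by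
    rw [Finset.sum_boole]
    congr 1
    exact congrArg Finset.card (by simp)
  rw [lhs]
  simp_rw [← step1, step2]
  rw [Finset.sum_comm]
  refine Finset.sum_congr rfl ?_
  intro T _
  rw [← Finset.mul_sum]
  congr 1
  calc (∑ f : V → Fin n, ∏ e ∈ T, chi f e)
      = ∑ f : V → Fin n, if f ∈ monoSet (V := V) n T then (1:ℝ) else 0 := by
        refine Finset.sum_congr rfl fun f _ => prod_chi f T
    _ = ((monoSet (V := V) n T).card : ℝ) := by
        rw [Finset.sum_boole]; congr 1; exact congrArg Finset.card (by simp)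
    _ = (n:ℝ) ^ cc (V := V) T := by rw [monoSet_card]; push_cast; ring

lemma cc_empty : cc (V := V) (∅ : Finset (Sym2 V)) = Fintype.card V := by
  have h : ((∅ : Finset (Sym2 V)) : Set (Sym2 V)) = ∅ := by simp
  rw [cc, h, fromEdgeSet_empty]
  have e : (⊥ : SimpleGraph V).ConnectedComponent ≃ V :=
  { toFun := ConnectedComponent.lift id (fun v w p _ => by
      cases p with
      | nil => rfl
      | cons h _ => exact h.elim)
    invFun := fun v => (⊥ : SimpleGraph V).connectedComponentMk v
    left_inv := fun c => ConnectedComponent.ind (fun v => rfl) c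
    right_inv := fun v => rfl }
  rw [Nat.card_congr e, Nat.card_eq_fintype_card]

private lemma walk_cases {S : Finset (Sym2 V)} {u w a b : V}
    (p : (fromEdgeSet ((insert s(u,w) S : Finset (Sym2 V)) : Set (Sym2 V))).Walk a b) :
    (fromEdgeSet (S : Set (Sym2 V))).Reachable a b ∨
      ((fromEdgeSet (S : Set (Sym2 V))).Reachable a u ∧
        (fromEdgeSet (S : Set (Sym2 V))).Reachable w b) ∨
      ((fromEdgeSet (S : Set (Sym2 V))).Reachable a w ∧
        (fromEdgeSet (S : Set (Sym2 V))).Reachable u b) := by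
  induction p with
  | nil => exact Or.inl (Reachable.refl _)
  | @cons a c b h p ih =>
    rw [fromEdgeSet_adj] at h
    obtain ⟨hmem, hne⟩ := h
    rw [Finset.coe_insert, Set.mem_insert_iff] at hmem
    rcases hmem with heq | hS
    · rw [Sym2.eq_iff] at heq
      rcases heq with ⟨rfl, rfl⟩ | ⟨rfl, rfl⟩
      · rcases ih with h1 | ⟨h1, h2⟩ | ⟨h1, h2⟩
        · exact Or.inr (Or.inl ⟨Reachable.refl _, h1⟩)
        · exact Or.inr (Or.inl ⟨Reachable.refl _, h2⟩)
        · exact Or.inl h2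
      · rcases ih with h1 | ⟨h1, h2⟩ | ⟨h1, h2⟩
        · exact Or.inr (Or.inr ⟨Reachable.refl _, h1⟩)
        · exact Or.inl h2
        · exact Or.inr (Or.inr ⟨Reachable.refl _, h2⟩)
    · have hac : (fromEdgeSet (S : Set (Sym2 V))).Reachable a c :=
        Adj.reachable ((fromEdgeSet_adj _).mpr ⟨hS, hne⟩)
      rcases ih with h1 | ⟨h1, h2⟩ | ⟨h1, h2⟩
      · exact Or.inl (hac.trans h1)
      · exact Or.inr (Or.inl ⟨hac.trans h1, h2⟩)
      · exact Or.inr (Or.inr ⟨hac.trans h1, h2⟩)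

private lemma support_reachable {G : SimpleGraph V} {a b : V} (q : G.Walk a b) :
    ∀ x ∈ q.support, G.Reachable a x := by
  induction q with
  | nil => intro x hx; rw [SimpleGraph.Walk.support_nil, List.mem_singleton] at hx; subst hx; rfl
  | @cons a c b h p ih =>
    intro x hx
    rw [SimpleGraph.Walk.support_cons, List.mem_cons] at hx
    rcases hx with rfl | hx
    · rfl
    · exact (h.reachable).trans (ih x hx)

private lemma nat_card_option (X : Type*) [Finite X] :
    Nat.card (Option X) = Nat.card X + 1 := by
  haveI := Fintype.ofFinite X
  simp [Nat.card_eq_fintype_card]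

lemma cc_good (F : SimpleGraph V) [DecidableRel F.Adj] (hF : F.CliqueFree 3)
    (S : Finset (Sym2 V)) : S ⊆ F.edgeFinset →
      (Fintype.card V ≤ cc (V := V) S + S.card ∧
        (cc (V := V) S + S.card = Fintype.card V ∨
          (cc (V := V) S + 3 ≤ Fintype.card V ∧ 4 ≤ S.card))) := by
  classical
  induction S using Finset.induction_on with
  | empty => intro _; rw [cc_empty]; simp
  | @insert e S he ih =>
    intro hsub
    induction e using Sym2.ind with
    | _ u w =>
    have hsub' : S ⊆ F.edgeFinset := (Finset.subset_insert _ _).trans hsub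
    obtain ⟨hv, hgood⟩ := ih hsub'
    have hadj : F.Adj u w := by
      have := hsub (Finset.mem_insert_self _ _)
      rwa [mem_edgeFinset, mem_edgeSet] at this
    have hne : u ≠ w := hadj.ne
    set G := fromEdgeSet (S : Set (Sym2 V)) with hGdef
    set G' := fromEdgeSet ((insert s(u,w) S : Finset (Sym2 V)) : Set (Sym2 V)) with hG'def
    have hle : G ≤ G' := fromEdgeSet_mono (by
      rw [Finset.coe_subset]; exact Finset.subset_insert _ _)
    set φ : G.ConnectedComponent → G'.ConnectedComponent :=
      ConnectedComponent.map (Hom.ofLE hle) with hφdef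
    have hφs : Function.Surjective φ := fun c =>
      ConnectedComponent.ind (fun x => ⟨G.connectedComponentMk x, rfl⟩) c
    have claim : ∀ x y, φ x = φ y → x = y ∨
        ((x = G.connectedComponentMk u ∨ x = G.connectedComponentMk w) ∧
         (y = G.connectedComponentMk u ∨ y = G.connectedComponentMk w)) := by
      intro x y
      refine ConnectedComponent.ind₂ (fun a b hab => ?_) x y
      have hr : G'.Reachable a b := ConnectedComponent.exact hab
      obtain ⟨p⟩ := hr
      rcases walk_cases (S := S) (u := u) (w := w) p with h1 | ⟨h1, h2⟩ | ⟨h1, h2⟩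
      · exact Or.inl (ConnectedComponent.sound h1)
      · exact Or.inr ⟨Or.inl (ConnectedComponent.sound h1),
          Or.inr (ConnectedComponent.sound h2.symm)⟩
      · exact Or.inr ⟨Or.inr (ConnectedComponent.sound h1),
          Or.inl (ConnectedComponent.sound h2.symm)⟩
    have card_le1 : cc (V := V) (insert s(u,w) S) ≤ cc (V := V) S :=
      Nat.card_le_card_of_surjective φ hφs
    have card_ge : cc (V := V) S ≤ cc (V := V) (insert s(u,w) S) + 1 := by
      set ψ : G.ConnectedComponent → Option (G'.ConnectedComponent) :=
        fun x => if x = G.connectedComponentMk w then none else some (φ x) with hψdef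
      have hinj : Function.Injective ψ := by
        intro x y hxy
        by_cases hx : x = G.connectedComponentMk w <;>
          by_cases hy : y = G.connectedComponentMk w
        · rw [hx, hy]
        · simp [hψdef, hx, hy] at hxy
        · simp [hψdef, hx, hy] at hxy
        · simp only [hψdef, if_neg hx, if_neg hy, Option.some.injEq] at hxy
          rcases claim x y hxy with h | ⟨h1, h2⟩
          · exact h
          · rw [h1.resolve_right hx, h2.resolve_right hy]
      calc cc (V := V) S ≤ Nat.card (Option (G'.ConnectedComponent)) :=
            Nat.card_le_card_of_injective ψ hinj
        _ = cc (V := V) (insert s(u,w) S) + 1 := nat_card_option _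
    have hcardins : (insert s(u,w) S).card = S.card + 1 := Finset.card_insert_of_notMem he
    have adj_mem : ∀ {x y : V}, G.Adj x y → s(x,y) ∈ S := by
      intro x y hxy
      rw [hGdef, fromEdgeSet_adj] at hxy
      exact_mod_cast hxy.1
    by_cases hreach : G.Reachable u w
    · -- u,w already connected: triangle-freeness forces a long path
      obtain ⟨q⟩ := hreach
      have hp := q.toPath.2
      set p : G.Walk u w := q.toPath.1 with hpdef
      have hlen3 : 3 ≤ p.length := by
        by_contra hlt
        push_neg at hlt
        interval_cases hl : p.length
        · exact hne (SimpleGraph.Walk.eq_of_length_eq_zero hl)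
        · exact he (adj_mem (SimpleGraph.Walk.adj_of_length_eq_one hl))
        · have h1 : G.Adj u (p.getVert 1) := by
            have := p.adj_getVert_succ (i := 0) (by omega)
            rwa [SimpleGraph.Walk.getVert_zero] at this
          have h2 : G.Adj (p.getVert 1) w := by
            have h := p.adj_getVert_succ (i := 1) (by omega)
            have h2' : p.getVert 2 = w := by
              have := p.getVert_length
              rwa [hl] at this
            rwa [h2'] at h
          have hF1 : F.Adj u (p.getVert 1) := by
            have := hsub' (adj_mem h1)
            rwa [mem_edgeFinset, mem_edgeSet] at this
          have hF2 : F.Adj (p.getVert 1) w := by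
            have := hsub' (adj_mem h2)
            rwa [mem_edgeFinset, mem_edgeSet] at this
          exact hF _ (is3Clique_triple_iff.mpr ⟨hF1, hadj, hF2⟩)
      have hS3 : 3 ≤ S.card := by
        have hsubE : p.edges.toFinset ⊆ S := by
          intro e' he'
          rw [List.mem_toFinset] at he'
          have := p.edges_subset_edgeSet he'
          rw [hGdef, edgeSet_fromEdgeSet] at this
          exact_mod_cast this.1
        have hcard : p.edges.toFinset.card = p.length := by
          rw [List.toFinset_card_of_nodup hp.isTrail.edges_nodup,
            SimpleGraph.Walk.length_edges]
        have := Finset.card_le_card hsubE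
        omega
      set T : Finset V := p.support.toFinset with hTdef
      have hT4 : 4 ≤ T.card := by
        rw [hTdef, List.toFinset_card_of_nodup hp.support_nodup,
          SimpleGraph.Walk.length_support]
        omega
      have huT : u ∈ T := by
        rw [hTdef, List.mem_toFinset]; exact p.start_mem_support
      have hsuppc : ∀ x ∈ T, G'.connectedComponentMk x = G'.connectedComponentMk u := by
        intro x hx
        rw [hTdef, List.mem_toFinset] at hx
        have hr : G.Reachable u x := support_reachable p x hx
        exact (ConnectedComponent.sound (hr.mono hle)).symm
      obtain ⟨T', hT'sub, hT'card⟩ :=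
        Finset.exists_subset_card_eq (s := T.erase u) (n := 3)
          (by rw [Finset.card_erase_of_mem huT]; omega)
      have hccle : cc (V := V) (insert s(u,w) S) + 3 ≤ Fintype.card V := by
        have hsurj : Function.Surjective
            (fun x : ↥(Finset.univ \ T') => G'.connectedComponentMk x.1) := by
          intro c
          refine ConnectedComponent.ind (fun z => ?_) c
          by_cases hz : z ∈ T'
          · refine ⟨⟨u, ?_⟩, ?_⟩
            · rw [Finset.mem_sdiff]
              exact ⟨Finset.mem_univ _,
                fun hu => Finset.notMem_erase u T (hT'sub hu)⟩
            · have hzT : z ∈ T := Finset.mem_of_mem_erase (hT'sub hz)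
              exact (hsuppc z hzT).symm
          · exact ⟨⟨z, by rw [Finset.mem_sdiff]; exact ⟨Finset.mem_univ _, hz⟩⟩, rfl⟩
        have h1 : Nat.card G'.ConnectedComponent ≤ (Finset.univ \ T').card := by
          have h := Nat.card_le_card_of_surjective _ hsurj
          rwa [Nat.card_eq_fintype_card (α := ↥(Finset.univ \ T')),
            Fintype.card_coe] at h
        have h2 : 3 ≤ Fintype.card V := by
          have := Finset.card_le_card (hT'sub.trans (Finset.erase_subset _ _) |>.trans
            (Finset.subset_univ T))
          rw [Finset.card_univ] at this
          omega
        have h3 : (Finset.univ \ T').card = Fintype.card V - 3 := by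
          rw [Finset.card_sdiff_of_subset (Finset.subset_univ _), hT'card, Finset.card_univ]
        rw [h3] at h1
        have : cc (V := V) (insert s(u,w) S) ≤ Fintype.card V - 3 := h1
        omega
      refine ⟨by omega, Or.inr ⟨hccle, by omega⟩⟩
    · -- u,w in different components: component count drops by exactly 1
      have hmkne : G.connectedComponentMk u ≠ G.connectedComponentMk w :=
        fun h => hreach (ConnectedComponent.exact h)
      have hlt : cc (V := V) (insert s(u,w) S) < cc (V := V) S := by
        rcases lt_or_eq_of_le card_le1 with h | h
        · exact h
        · exfalso
          have hbij : Function.Bijective φ :=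
            (Nat.bijective_iff_surjective_and_card φ).mpr ⟨hφs, h.symm⟩
          have hadj' : G'.Adj u w := by
            rw [hG'def, fromEdgeSet_adj]
            exact ⟨by simp, hne⟩
          have heq : φ (G.connectedComponentMk u) = φ (G.connectedComponentMk w) :=
            ConnectedComponent.sound hadj'.reachable
          exact hmkne (hbij.injective heq)
      refine ⟨by omega, ?_⟩
      rcases hgood with h | ⟨h3, h4⟩
      · left; omega
      · right; exact ⟨by omega, by omega⟩

end Aux

private lemma abs_log_le {x : ℝ} (hx : 1/2 ≤ x) : |Real.log x| ≤ 2 * |x - 1| := by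
  have hx0 : (0:ℝ) < x := by linarith
  rcases le_or_gt 1 x with h1 | h1
  · rw [abs_of_nonneg (Real.log_nonneg h1), abs_of_nonneg (by linarith)]
    have := Real.log_le_sub_one_of_pos hx0
    linarith
  · rw [abs_of_nonpos (Real.log_nonpos (by linarith) (by linarith)),
      abs_of_neg (by linarith)]
    have hinv : Real.log x⁻¹ ≤ x⁻¹ - 1 := Real.log_le_sub_one_of_pos (by positivity)
    rw [Real.log_inv] at hinv
    have h2 : x⁻¹ - 1 ≤ 2 * (1 - x) := by
      rw [inv_eq_one_div]
      rw [div_sub' (ne_of_gt hx0), div_le_iff₀ hx0]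
      nlinarith
    linarith

theorem triangle_free_density_tendsto_one {V : Type*} [Fintype V] [DecidableEq V]
    (F : SimpleGraph V) [DecidableRel F.Adj] (hF : F.CliqueFree 3) :
    Tendsto (fun n : ℕ => (homCount F (tensorPow n (n ^ 2)) : ℝ) /
        (((1 - 1 / (n : ℝ)) ^ (n ^ 2)) ^ F.edgeFinset.card
          * ((n : ℝ) ^ (n ^ 2)) ^ (Fintype.card V)))
      atTop (nhds 1) := by
  classical
  set v := Fintype.card V with hv
  set m := F.edgeFinset.card with hm
  set P : ℕ → ℕ := fun n => (properSet F n).card with hP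
  set D : ℕ → ℝ := fun n => (n:ℝ)^v * (1 - 1/(n:ℝ))^m with hD
  have key1 : ∀ n : ℕ, 1 ≤ n → |(P n : ℝ) - D n| ≤ 2^(m+1) * (n:ℝ)^v / (n:ℝ)^3 := by
    intro n hn
    have hn0 : (0:ℝ) < (n:ℝ) := by exact_mod_cast hn
    have hn1 : (1:ℝ) ≤ (n:ℝ) := by exact_mod_cast hn
    have hDsum : D n = ∑ T ∈ F.edgeFinset.powerset,
        (-1:ℝ)^T.card * ((n:ℝ)^v / (n:ℝ)^T.card) := by
      have hb : (1 - 1/(n:ℝ))^m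
          = ∑ T ∈ F.edgeFinset.powerset, (-1:ℝ)^T.card / (n:ℝ)^T.card := by
        have e1 : (1 - 1/(n:ℝ))^m = ∏ _e ∈ F.edgeFinset, ((-(1/(n:ℝ))) + 1) := by
          rw [Finset.prod_const, hm]
          congr 1
          ring
        rw [e1, Finset.prod_add]
        refine Finset.sum_congr rfl fun T _ => ?_
        rw [Finset.prod_const_one, mul_one, Finset.prod_const]
        rw [show (-(1/(n:ℝ))) = (-1)/(n:ℝ) by ring, div_pow]
      simp only [hD]
      rw [hb, Finset.mul_sum]
      refine Finset.sum_congr rfl fun T _ => ?_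
      ring
    simp only [hP]
    rw [incl_excl F n, hDsum, ← Finset.sum_sub_distrib]
    have perT : ∀ T ∈ F.edgeFinset.powerset,
        |(-1:ℝ)^T.card * (n:ℝ)^(cc (V := V) T) - (-1:ℝ)^T.card * ((n:ℝ)^v / (n:ℝ)^T.card)|
          ≤ 2 * (n:ℝ)^v / (n:ℝ)^3 := by
      intro T hT
      rw [Finset.mem_powerset] at hT
      rw [← mul_sub, abs_mul, abs_pow, abs_neg, abs_one, one_pow, one_mul]
      rcases (cc_good F hF T hT).2 with hcase | ⟨h3, h4⟩
      · have he : (n:ℝ)^(cc (V := V) T) = (n:ℝ)^v/(n:ℝ)^T.card := by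
          rw [eq_div_iff (by positivity), ← pow_add, hcase]
        rw [he, sub_self, abs_zero]
        positivity
      · have b1 : (n:ℝ)^(cc (V := V) T) ≤ (n:ℝ)^v/(n:ℝ)^3 := by
          rw [le_div_iff₀ (by positivity), ← pow_add]
          exact pow_le_pow_right₀ hn1 (by omega)
        have b2 : (n:ℝ)^v/(n:ℝ)^T.card ≤ (n:ℝ)^v/(n:ℝ)^3 := by
          rw [div_le_div_iff₀ (by positivity) (by positivity)]
          exact mul_le_mul_of_nonneg_left (pow_le_pow_right₀ hn1 (by omega)) (by positivity)
        have ha0 : (0:ℝ) ≤ (n:ℝ)^(cc (V := V) T) := by positivity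
        have hb0 : (0:ℝ) ≤ (n:ℝ)^v/(n:ℝ)^T.card := by positivity
        have habs : |(n:ℝ)^(cc (V := V) T) - (n:ℝ)^v/(n:ℝ)^T.card|
            ≤ (n:ℝ)^(cc (V := V) T) + (n:ℝ)^v/(n:ℝ)^T.card := by
          rw [abs_sub_le_iff]
          constructor <;> linarith
        calc |(n:ℝ)^(cc (V := V) T) - (n:ℝ)^v/(n:ℝ)^T.card|
            ≤ (n:ℝ)^(cc (V := V) T) + (n:ℝ)^v/(n:ℝ)^T.card := habs
          _ ≤ (n:ℝ)^v/(n:ℝ)^3 + (n:ℝ)^v/(n:ℝ)^3 := by linarith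
          _ = 2 * (n:ℝ)^v / (n:ℝ)^3 := by ring
    calc |∑ T ∈ F.edgeFinset.powerset, ((-1:ℝ)^T.card * (n:ℝ)^(cc (V := V) T)
            - (-1:ℝ)^T.card * ((n:ℝ)^v / (n:ℝ)^T.card))|
        ≤ ∑ T ∈ F.edgeFinset.powerset, |(-1:ℝ)^T.card * (n:ℝ)^(cc (V := V) T)
            - (-1:ℝ)^T.card * ((n:ℝ)^v / (n:ℝ)^T.card)| := Finset.abs_sum_le_sum_abs _ _
      _ ≤ ∑ _T ∈ F.edgeFinset.powerset, 2 * (n:ℝ)^v / (n:ℝ)^3 := Finset.sum_le_sum perT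
      _ = (F.edgeFinset.powerset.card : ℝ) * (2 * (n:ℝ)^v / (n:ℝ)^3) := by
          rw [Finset.sum_const, nsmul_eq_mul]
      _ = 2^(m+1) * (n:ℝ)^v / (n:ℝ)^3 := by
          rw [Finset.card_powerset, ← hm]
          push_cast
          ring
  set C : ℝ := 2^(m+1) * 2^m with hC
  have hCpos : (0:ℝ) < C := by rw [hC]; positivity
  have key2 : ∀ n : ℕ, 2 ≤ n → 0 < D n ∧ |(P n:ℝ)/D n - 1| ≤ C/(n:ℝ)^3 := by
    intro n hn
    have hn0 : (0:ℝ) < (n:ℝ) := by exact_mod_cast (by omega : 0 < n)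
    have hhalf : (1:ℝ)/2 ≤ 1 - 1/(n:ℝ) := by
      have : (1:ℝ)/(n:ℝ) ≤ 1/2 := by
        rw [div_le_div_iff₀ hn0 (by norm_num)]
        have : (2:ℝ) ≤ (n:ℝ) := by exact_mod_cast hn
        linarith
      linarith
    have hDlow : (n:ℝ)^v / 2^m ≤ D n := by
      have h1 : (n:ℝ)^v * ((1:ℝ)/2)^m ≤ (n:ℝ)^v * (1 - 1/(n:ℝ))^m := by
        gcongr
      calc (n:ℝ)^v / 2^m = (n:ℝ)^v * ((1:ℝ)/2)^m := by
            rw [div_pow]; ring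
        _ ≤ (n:ℝ)^v * (1 - 1/(n:ℝ))^m := h1
        _ = D n := by simp only [hD]
    have hDpos : 0 < D n := lt_of_lt_of_le (by positivity) hDlow
    refine ⟨hDpos, ?_⟩
    have heq : (P n:ℝ)/D n - 1 = ((P n:ℝ) - D n)/D n := by
      rw [sub_div, div_self (ne_of_gt hDpos)]
    rw [heq, abs_div, abs_of_pos hDpos]
    have hstep : |(P n:ℝ) - D n| / D n ≤ (2^(m+1) * (n:ℝ)^v / (n:ℝ)^3) / ((n:ℝ)^v / 2^m) :=
      div_le_div₀ (by positivity) (key1 n (by omega)) (by positivity) hDlow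
    refine hstep.trans (le_of_eq ?_)
    have hz1 : ((n:ℝ)^v) ≠ 0 := by positivity
    have hz2 : ((n:ℝ)) ≠ 0 := ne_of_gt hn0
    have hz3 : ((2:ℝ)^m) ≠ 0 := by positivity
    rw [hC]
    field_simp
  set r : ℕ → ℝ := fun n => (P n:ℝ)/D n with hr
  have hterm : Tendsto (fun n : ℕ => C/(n:ℝ)^3) atTop (nhds 0) := by
    have hb := tendsto_const_div_atTop_nhds_zero_nat C
    refine squeeze_zero' ?_ ?_ hb
    · filter_upwards [eventually_ge_atTop 1] with n hn
      have hn0 : (0:ℝ) < (n:ℝ) := by exact_mod_cast hn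
      positivity
    · filter_upwards [eventually_ge_atTop 1] with n hn
      have hn0 : (0:ℝ) < (n:ℝ) := by exact_mod_cast hn
      have hn1 : (1:ℝ) ≤ (n:ℝ) := by exact_mod_cast hn
      have hcube : (n:ℝ) ≤ (n:ℝ)^3 := by
        nlinarith [mul_nonneg (mul_nonneg hn0.le (sub_nonneg.mpr hn1)) (add_nonneg hn0.le zero_le_one)]
      exact div_le_div_of_nonneg_left hCpos.le hn0 hcube
  have hsmall : ∀ᶠ n : ℕ in atTop, C/(n:ℝ)^3 < 1/2 :=
    hterm.eventually (gt_mem_nhds (show (0:ℝ) < 1/2 by norm_num))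
  have hhalfr : ∀ᶠ n in atTop, 1/2 ≤ r n ∧ |r n - 1| ≤ C/(n:ℝ)^3 := by
    filter_upwards [eventually_ge_atTop 2, hsmall] with n hn hs
    obtain ⟨hDpos, hbound⟩ := key2 n hn
    have h1 := abs_le.mp hbound
    refine ⟨by simp only [hr]; linarith [h1.1], hbound⟩
  have hlog : Tendsto (fun n : ℕ => ((n^2 : ℕ) : ℝ) * Real.log (r n)) atTop (nhds 0) := by
    refine squeeze_zero_norm' ?_ (tendsto_const_div_atTop_nhds_zero_nat (2*C))
    filter_upwards [hhalfr, eventually_ge_atTop 1] with n hhb hn1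
    obtain ⟨hhalf, hbound⟩ := hhb
    have hn0 : (0:ℝ) < (n:ℝ) := by exact_mod_cast hn1
    have hlogb : |Real.log (r n)| ≤ 2 * |r n - 1| := abs_log_le hhalf
    have : ‖((n^2 : ℕ) : ℝ) * Real.log (r n)‖ = (n:ℝ)^2 * |Real.log (r n)| := by
      rw [Real.norm_eq_abs, abs_mul]
      congr 1
      · push_cast
        rw [abs_of_nonneg (by positivity)]
    rw [this]
    calc (n:ℝ)^2 * |Real.log (r n)| ≤ (n:ℝ)^2 * (2 * (C/(n:ℝ)^3)) := by
          have := hlogb.trans (by linarith : 2 * |r n - 1| ≤ 2 * (C/(n:ℝ)^3))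
          exact mul_le_mul_of_nonneg_left this (by positivity)
      _ = 2*C/(n:ℝ) := by
          field_simp
  have hexp : Tendsto (fun n : ℕ => Real.exp (((n^2 : ℕ) : ℝ) * Real.log (r n)))
      atTop (nhds 1) := by
    have h := (Real.continuous_exp.tendsto 0).comp hlog
    simpa [Function.comp_def] using h
  refine Tendsto.congr' ?_ hexp
  filter_upwards [eventually_ge_atTop 2, hhalfr] with n hn hhb
  obtain ⟨hhalf, -⟩ := hhb
  have hrpos : 0 < r n := by linarith
  have hexp_eq : Real.exp (((n^2 : ℕ) : ℝ) * Real.log (r n)) = r n ^ (n^2) := by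
    rw [Real.exp_nat_mul, Real.exp_log hrpos]
  rw [hexp_eq]
  have hhc : homCount F (tensorPow n (n ^ 2)) = P n ^ (n^2) := by
    simp only [hP]
    exact homCount_eq F n (n^2) (by positivity)
  rw [hhc]
  have hDpow : ((1 - 1/(n:ℝ))^(n^2))^m * ((n:ℝ)^(n^2))^v = (D n)^(n^2) := by
    simp only [hD]
    ring
  rw [hDpow]
  push_cast
  rw [← div_pow]
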